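/- arXiv:2106.13641 — 2 statements merged into one kernel-verified Lean document; each statement's English description precedes it below -/
import Mathlib

section
/- For the antisymmetric 6×6 matrix L built from reals c₁, c₂, c₃ as in the CD-grid stabilization, the kernel of L (and hence of L²) has dimension at least 2 whenever (c₁, c₂, c₃) ≠ (0,0,0); explicitly, the vectors (c₃, 0, c₂, 0, c₁, 0) and (0, c₃, 0, c₂, 0, c₁) lie in ker L. -/
noncomputable section

/-- The Fourier symbol `L` of the edge-jump coupling for the CD-grid stabilization. -/
def Lmat (c1 c2 c3 : ℝ) : Matrix (Fin 6) (Fin 6) ℝ :=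
  !![0, 0, c1, 0, -c2, 0;
     0, 0, 0, c1, 0, -c2;
     -c1, 0, 0, 0, c3, 0;
     0, -c1, 0, 0, 0, c3;
     c2, 0, -c3, 0, 0, 0;
     0, c2, 0, -c3, 0, 0]

@[simp] lemma cons_val_five {α : Type*} (x0 x1 x2 x3 x4 x5 : α) :
    (![x0, x1, x2, x3, x4, x5] : Fin 6 → α) 5 = x5 := rfl

/-- The vectors `(c₃,0,c₂,0,c₁,0)` and `(0,c₃,0,c₂,0,c₁)` lie in the kernel of `L`, and if
`(c₁,c₂,c₃) ≠ (0,0,0)` the kernel of `L` (hence of `L²`) has dimension at least `2`. -/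
theorem Lmat_kernel (c1 c2 c3 : ℝ) :
    (Lmat c1 c2 c3).mulVec ![c3, 0, c2, 0, c1, 0] = 0 ∧
    (Lmat c1 c2 c3).mulVec ![0, c3, 0, c2, 0, c1] = 0 ∧
    (¬(c1 = 0 ∧ c2 = 0 ∧ c3 = 0) →
      2 ≤ Module.finrank ℝ (LinearMap.ker (Matrix.toLin' (Lmat c1 c2 c3))) ∧
      2 ≤ Module.finrank ℝ (LinearMap.ker (Matrix.toLin' ((Lmat c1 c2 c3) ^ 2)))) := by
  have h1 : (Lmat c1 c2 c3).mulVec ![c3, 0, c2, 0, c1, 0] = 0 := by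
    simp only [Lmat, Matrix.cons_mulVec, Matrix.cons_dotProduct, Matrix.dotProduct_of_isEmpty,
      Matrix.empty_mulVec]
    funext i
    fin_cases i <;> simp <;> ring
  have h2 : (Lmat c1 c2 c3).mulVec ![0, c3, 0, c2, 0, c1] = 0 := by
    simp only [Lmat, Matrix.cons_mulVec, Matrix.cons_dotProduct, Matrix.dotProduct_of_isEmpty,
      Matrix.empty_mulVec]
    funext i
    fin_cases i <;> simp <;> ring
  refine ⟨h1, h2, fun hc => ?_⟩
  -- the two kernel vectors as elements of ker
  have hm1 : (![c3, 0, c2, 0, c1, 0] : Fin 6 → ℝ) ∈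
      LinearMap.ker (Matrix.toLin' (Lmat c1 c2 c3)) := by
    simpa [Matrix.toLin'_apply] using h1
  have hm2 : (![0, c3, 0, c2, 0, c1] : Fin 6 → ℝ) ∈
      LinearMap.ker (Matrix.toLin' (Lmat c1 c2 c3)) := by
    simpa [Matrix.toLin'_apply] using h2
  set K := LinearMap.ker (Matrix.toLin' (Lmat c1 c2 c3))
  have hli : LinearIndependent ℝ (![⟨_, hm1⟩, ⟨_, hm2⟩] : Fin 2 → K) := by
    rw [Fintype.linearIndependent_iff]
    intro g hg
    have hg' : g 0 • (![c3, 0, c2, 0, c1, 0] : Fin 6 → ℝ) +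
        g 1 • (![0, c3, 0, c2, 0, c1] : Fin 6 → ℝ) = 0 := by
      have := congrArg (Subtype.val) hg
      simpa [Fin.sum_univ_two] using this
    have e0 := congrFun hg' 0
    have e1 := congrFun hg' 1
    have e2 := congrFun hg' 2
    have e3 := congrFun hg' 3
    have e4 := congrFun hg' 4
    have e5 := congrFun hg' 5
    simp at e0 e1 e2 e3 e4 e5
    intro i
    rcases not_and_or.mp hc with h | h
    · fin_cases i
      · exact e4.resolve_right h
      · exact e5.resolve_right h
    rcases not_and_or.mp h with h | h
    · fin_cases i
      · exact e2.resolve_right h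
      · exact e3.resolve_right h
    · fin_cases i
      · exact e0.resolve_right h
      · exact e1.resolve_right h
  have hK : 2 ≤ Module.finrank ℝ K := by
    simpa using hli.fintype_card_le_finrank
  refine ⟨hK, le_trans hK ?_⟩
  have hle : K ≤ LinearMap.ker (Matrix.toLin' ((Lmat c1 c2 c3) ^ 2)) := by
    intro x hx
    have hx0 : Matrix.toLin' (Lmat c1 c2 c3) x = 0 := hx
    have : Matrix.toLin' ((Lmat c1 c2 c3) ^ 2) x = 0 := by
      rw [sq, Matrix.toLin'_mul]
      simp [hx0]
    exact this
  exact Submodule.finrank_mono hle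

end
end

section
/- Let D be the 2×6 matrix D = (1/2)[[−g_x*, −g_y*, 0, g_x, g_y, 0],[0, −g_x*, −g_y*, 0, g_x, g_y]], E the 6×2 matrix E = [[g_x,0],[g_y/2, g_x/2],[0,g_y],[−g_x*,0],[−g_y*/2,−g_x*/2],[0,−g_y*]], and Z = diag(S,S) with S = η[[1+z,0,−1+z],[0,2,0],[−1+z,0,1+z]], for arbitrary g_x, g_y ∈ ℂ and η > 0, z > 0. Then the 2×2 matrix D·Z·E is Hermitian and negative semidefinite, and it is negative definite whenever (g_x, g_y) ≠ (0,0). -/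
open Complex Matrix
open scoped ComplexOrder

noncomputable section

/-- The A-grid divergence symbol `D` (includes the factor `1/2` from the lumped area). -/
def Dmat (gx gy : ℂ) : Matrix (Fin 2) (Fin 6) ℂ :=
  (1 / 2 : ℂ) • !![-(starRingEnd ℂ gx), -(starRingEnd ℂ gy), 0, gx, gy, 0;
                   0, -(starRingEnd ℂ gx), -(starRingEnd ℂ gy), 0, gx, gy]

/-- The A-grid strain-rate symbol `E`. -/
def Emat (gx gy : ℂ) : Matrix (Fin 6) (Fin 2) ℂ :=
  !![gx, 0;
     gy / 2, gx / 2;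
     0, gy;
     -(starRingEnd ℂ gx), 0;
     -(starRingEnd ℂ gy) / 2, -(starRingEnd ℂ gx) / 2;
     0, -(starRingEnd ℂ gy)]

/-- The constitutive block matrix `Z = diag(S, S)` with
`S = η[[1+z,0,−1+z],[0,2,0],[−1+z,0,1+z]]`. -/
def Zmat (η z : ℝ) : Matrix (Fin 6) (Fin 6) ℂ :=
  (η : ℂ) • !![1 + (z : ℂ), 0, -1 + (z : ℂ), 0, 0, 0;
               0, 2, 0, 0, 0, 0;
               -1 + (z : ℂ), 0, 1 + (z : ℂ), 0, 0, 0;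
               0, 0, 0, 1 + (z : ℂ), 0, -1 + (z : ℂ);
               0, 0, 0, 0, 2, 0;
               0, 0, 0, -1 + (z : ℂ), 0, 1 + (z : ℂ)]


private lemma cons_val_five_s13 {α : Type*} {m : ℕ} (x : α)
    (u : Fin m.succ.succ.succ.succ.succ → α) :
    Matrix.vecCons x u 5 = Matrix.vecHead (Matrix.vecTail (Matrix.vecTail
      (Matrix.vecTail (Matrix.vecTail u)))) :=
  rfl

/-- Auxiliary factor matrix `F` with `-(D·Z·E) = (η/2) • Fᴴ·F`. -/
def Fmat (gx gy : ℂ) (z : ℝ) : Matrix (Fin 6) (Fin 2) ℂ :=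
  !![gx, -gy;
     gy, gx;
     (Real.sqrt z : ℂ) * gx, (Real.sqrt z : ℂ) * gy;
     -(starRingEnd ℂ gx), starRingEnd ℂ gy;
     -(starRingEnd ℂ gy), -(starRingEnd ℂ gx);
     -((Real.sqrt z : ℂ) * starRingEnd ℂ gx), -((Real.sqrt z : ℂ) * starRingEnd ℂ gy)]

lemma Agrid_key (gx gy : ℂ) (η z : ℝ) (hz : 0 ≤ z) :
    -(Dmat gx gy * Zmat η z * Emat gx gy) =
      ((η / 2 : ℝ) : ℂ) • ((Fmat gx gy z)ᴴ * Fmat gx gy z) := by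
  have hz' : (z : ℂ) = (Real.sqrt z : ℂ) * (Real.sqrt z : ℂ) := by
    rw [← Complex.ofReal_mul, Real.mul_self_sqrt hz]
  ext i j
  fin_cases i <;> fin_cases j <;>
    simp [Dmat, Emat, Zmat, Fmat, Matrix.mul_apply, Fin.sum_univ_six,
      Matrix.conjTranspose_apply, hz', Complex.ofReal_div, _root_.map_mul, Complex.conj_ofReal,
      cons_val_five_s13, Matrix.vecHead, Matrix.vecTail] <;>
    ring

/-- The A-grid stress-divergence symbol `D·Z·E` is Hermitian and negative semidefinite,
and negative definite whenever `(g_x, g_y) ≠ (0,0)`. -/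
theorem Agrid_symbol_negdef (gx gy : ℂ) (η z : ℝ) (hη : 0 < η) (hz : 0 < z) :
    (Dmat gx gy * Zmat η z * Emat gx gy).IsHermitian ∧
    (-(Dmat gx gy * Zmat η z * Emat gx gy)).PosSemidef ∧
    (¬(gx = 0 ∧ gy = 0) → (-(Dmat gx gy * Zmat η z * Emat gx gy)).PosDef) := by
  have key := Agrid_key gx gy η z hz.le
  set F := Fmat gx gy z with hF
  have hc : (0 : ℝ) < η / 2 := by positivity
  have hcC : (0 : ℂ) < ((η / 2 : ℝ) : ℂ) := by
    rw [Complex.lt_def]; simp [hc]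
  -- Hermitian
  have hherm : (-(Dmat gx gy * Zmat η z * Emat gx gy)).IsHermitian := by
    rw [key]
    unfold Matrix.IsHermitian
    rw [Matrix.conjTranspose_smul, Matrix.conjTranspose_mul,
      Matrix.conjTranspose_conjTranspose]
    congr 1
    simp [Complex.star_def, Complex.conj_ofReal]
  -- quadratic form
  have hquad : ∀ x : Fin 2 → ℂ,
      star x ⬝ᵥ ((-(Dmat gx gy * Zmat η z * Emat gx gy)) *ᵥ x) =
        ((η / 2 : ℝ) : ℂ) * (star (F *ᵥ x) ⬝ᵥ (F *ᵥ x)) := by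
    intro x
    rw [key, Matrix.smul_mulVec, dotProduct_smul, smul_eq_mul,
      ← Matrix.mulVec_mulVec, Matrix.dotProduct_mulVec, Matrix.vecMul_conjTranspose,
      star_star]
  have hpsd : (-(Dmat gx gy * Zmat η z * Emat gx gy)).PosSemidef := by
    refine Matrix.PosSemidef.of_dotProduct_mulVec_nonneg hherm fun x => ?_
    rw [hquad x]
    exact mul_nonneg hcC.le (dotProduct_star_self_nonneg _)
  refine ⟨by simpa using hherm.neg, hpsd, fun hne => ?_⟩
  refine Matrix.PosDef.of_dotProduct_mulVec_pos hherm fun x hx => ?_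
  rw [hquad x]
  refine mul_pos hcC (Matrix.dotProduct_star_self_pos_iff.mpr ?_)
  intro hFx
  have h0 := congrFun hFx 0
  have h1 := congrFun hFx 1
  have h2 := congrFun hFx 2
  simp [hF, Fmat, Matrix.mulVec, dotProduct, Fin.sum_univ_two] at h0 h1 h2
  have hs : ((Real.sqrt z : ℝ) : ℂ) ≠ 0 := by
    simp [Real.sqrt_ne_zero'.mpr hz]
  have h2' : gx * x 0 + gy * x 1 = 0 := by
    have hh : ((Real.sqrt z : ℝ) : ℂ) * (gx * x 0 + gy * x 1) = 0 := by
      linear_combination h2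
    exact (mul_eq_zero.mp hh).resolve_left hs
  have hx0 : x 0 = 0 ∧ x 1 = 0 := by
    rcases em (gx = 0) with hgx | hgx
    · have hgy : gy ≠ 0 := fun h => hne ⟨hgx, h⟩
      subst hgx
      constructor
      · have h : gy * x 0 = 0 := by linear_combination h1
        exact (mul_eq_zero.mp h).resolve_left hgy
      · have h : gy * x 1 = 0 := by linear_combination h2'
        exact (mul_eq_zero.mp h).resolve_left hgy
    · have e0 : x 0 = 0 := by
        have h : gx * x 0 = 0 := by linear_combination (h0 + h2') / 2
        exact (mul_eq_zero.mp h).resolve_left hgx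
      refine ⟨e0, ?_⟩
      have h : gx * x 1 = 0 := by linear_combination h1 - gy * e0
      exact (mul_eq_zero.mp h).resolve_left hgx
  exact hx (funext fun i => by fin_cases i <;> simp [hx0.1, hx0.2])

end
end
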